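/- Let d ≥ 1 be an integer, R ≥ 0, and σ > 0. Define the minorant q̲(x) := (2πσ²)^{−d/2} · exp( −(‖x‖ + R)² / (2σ²) ) for x ∈ ℝ^d. Then for every y ∈ ℝ^d with ‖y‖ ≤ R, ∫_{ℝ^d} φ_σ(x − y)² / q̲(x) dx ≤ 2^{d/2} · exp( (17/2) · R²/σ² ). -/

import Mathlib

open MeasureTheory Real

/-- The Gaussian density on `ℝ^d` with mean `0` and covariance `σ² I_d`. -/
noncomputable def gaussDensity (d : ℕ) (σ : ℝ) (z : EuclideanSpace ℝ (Fin d)) : ℝ :=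
  (2 * π * σ ^ 2) ^ (-(d : ℝ) / 2) * Real.exp (-‖z‖ ^ 2 / (2 * σ ^ 2))

lemma integrable_rexp_neg_mul_sq_norm' {d : ℕ} {b : ℝ} (hb : 0 < b) :
    Integrable (fun v : EuclideanSpace ℝ (Fin d) ↦ Real.exp (-b * ‖v‖ ^ 2)) := by
  have h := (GaussianFourier.integrable_cexp_neg_mul_sq_norm_add
    (V := EuclideanSpace ℝ (Fin d)) (b := (b : ℂ)) (by simpa using hb) 0 0).norm
  refine h.congr (Filter.Eventually.of_forall fun v => ?_)
  simp
  norm_cast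
  exact Real.norm_of_nonneg (Real.exp_pos _).le

/-- Uniform bound on the weighted `L²` norm of the Gaussian kernel against the
minorant `q̲(x) = (2πσ²)^{−d/2} exp(−(‖x‖+R)²/(2σ²))`. -/
theorem kernel_weighted_L2_bound (d : ℕ) (hd : 1 ≤ d) (R σ : ℝ) (hR : 0 ≤ R)
    (hσ : 0 < σ)
    (qlow : EuclideanSpace ℝ (Fin d) → ℝ)
    (hqlow : ∀ x, qlow x =
      (2 * π * σ ^ 2) ^ (-(d : ℝ) / 2) * Real.exp (-(‖x‖ + R) ^ 2 / (2 * σ ^ 2)))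
    (y : EuclideanSpace ℝ (Fin d)) (hy : ‖y‖ ≤ R) :
    ∫ x, gaussDensity d σ (x - y) ^ 2 / qlow x ≤
      (2 : ℝ) ^ ((d : ℝ) / 2) * Real.exp ((17 / 2) * (R ^ 2 / σ ^ 2)) := by
  have hπ : 0 < π := Real.pi_pos
  set C : ℝ := (2 * π * σ ^ 2) ^ (-(d : ℝ) / 2) with hC
  have hCpos : 0 < C := Real.rpow_pos_of_pos (by positivity) _
  set K : ℝ := Real.exp ((17 / 2) * (R ^ 2 / σ ^ 2)) * C with hK
  have key : ∀ a b : ℝ, (C * Real.exp a) ^ 2 / (C * Real.exp b) =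
      C * Real.exp (2 * a - b) := by
    intro a b
    rw [two_mul, Real.exp_sub, Real.exp_add]
    field_simp [Real.exp_ne_zero]
  -- pointwise bound
  have hpt : ∀ x : EuclideanSpace ℝ (Fin d),
      gaussDensity d σ (x - y) ^ 2 / qlow x ≤
        K * Real.exp (-(1 / (4 * σ ^ 2)) * ‖x‖ ^ 2) := by
    intro x
    have hq : qlow x = C * Real.exp (-(‖x‖ + R) ^ 2 / (2 * σ ^ 2)) := hqlow x
    have hxy : ‖x - y‖ ^ 2 = ‖x‖ ^ 2 - 2 * inner ℝ x y + ‖y‖ ^ 2 :=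
      @norm_sub_sq_real (EuclideanSpace ℝ (Fin d)) _ _ x y
    have hinner : inner ℝ x y ≤ ‖x‖ * ‖y‖ := real_inner_le_norm x y
    have hx0 : (0:ℝ) ≤ ‖x‖ := norm_nonneg _
    have hy0 : (0:ℝ) ≤ ‖y‖ := norm_nonneg _
    -- key exponent inequality
    have hexp : -(2 * ‖x - y‖ ^ 2) + (‖x‖ + R) ^ 2 ≤ 17 * R ^ 2 - ‖x‖ ^ 2 / 2 := by
      rw [hxy]
      nlinarith [sq_nonneg (‖x‖ - 4 * ‖y‖ - 2 * R), sq_nonneg (R - ‖y‖),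
        mul_nonneg hx0 (sub_nonneg.2 hy), sq_nonneg (‖x‖ - ‖y‖)]
    have hLHS : gaussDensity d σ (x - y) ^ 2 / qlow x =
        C * Real.exp ((-(2 * ‖x - y‖ ^ 2) + (‖x‖ + R) ^ 2) / (2 * σ ^ 2)) := by
      rw [gaussDensity, hq, ← hC, key]
      congr 1
      field_simp
      ring
    rw [hLHS, hK]
    rw [mul_comm (Real.exp _) C, mul_assoc, ← Real.exp_add]
    refine mul_le_mul_of_nonneg_left (Real.exp_le_exp.2 ?_) hCpos.le
    rw [div_le_iff₀ (by positivity)]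
    calc -(2 * ‖x - y‖ ^ 2) + (‖x‖ + R) ^ 2 ≤ 17 * R ^ 2 - ‖x‖ ^ 2 / 2 := hexp
      _ = (17 / 2 * (R ^ 2 / σ ^ 2) + -(1 / (4 * σ ^ 2)) * ‖x‖ ^ 2) * (2 * σ ^ 2) := by
          field_simp; ring
  -- integrable majorant
  have hint : Integrable (fun x : EuclideanSpace ℝ (Fin d) ↦
      K * Real.exp (-(1 / (4 * σ ^ 2)) * ‖x‖ ^ 2)) :=
    (integrable_rexp_neg_mul_sq_norm' (by positivity)).const_mul K
  have hnonneg : ∀ x : EuclideanSpace ℝ (Fin d),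
      0 ≤ gaussDensity d σ (x - y) ^ 2 / qlow x := by
    intro x
    have hqpos : 0 < qlow x := by rw [hqlow x]; positivity
    positivity
  have hmono := integral_mono_of_nonneg (Filter.Eventually.of_forall hnonneg) hint
    (Filter.Eventually.of_forall hpt)
  refine hmono.trans ?_
  rw [integral_const_mul, GaussianFourier.integral_rexp_neg_mul_sq_norm (by positivity)]
  have hrank : (Module.finrank ℝ (EuclideanSpace ℝ (Fin d)) : ℝ) = (d : ℝ) := by
    simp [finrank_euclideanSpace_fin]
  rw [hrank]
  have h2 : (0:ℝ) < 2 * π * σ ^ 2 := by positivity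
  have hπb : π / (1 / (4 * σ ^ 2)) = 2 * (2 * π * σ ^ 2) := by field_simp; ring
  have hCX : C * (2 * (2 * π * σ ^ 2)) ^ ((d : ℝ) / 2) = 2 ^ ((d : ℝ) / 2) := by
    rw [Real.mul_rpow (by norm_num) h2.le, hC, mul_comm ((2:ℝ) ^ ((d:ℝ)/2)),
      ← mul_assoc, ← Real.rpow_add h2, neg_div, neg_add_cancel, Real.rpow_zero, one_mul]
  rw [hπb, hK]
  rw [mul_assoc, hCX]
  exact le_of_eq (mul_comm _ _)
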